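/- A TDDS (Σ, F) with Σ ⊆ A^ℕ (A finite) is equicontinuous if and only if all of its traces τ_F^{[k]} are finite sets, where τ_F^{[k]} = { (F^t(x)|_{[0,k]})_{t∈ℕ} : x ∈ Σ }. -/

import Mathlib

open scoped Classical

/-- A TDDS on a closed subset of `A^ℕ` (with the distance `d(x,y) = 2^{-min{i : x i ≠ y i}}`,
given by `PiNat.dist`) is equicontinuous iff all of its traces are finite. -/
theorem stmt2 {A : Type*} [Fintype A] [TopologicalSpace A] [DiscreteTopology A]
    (S : Set (ℕ → A)) (hclosed : IsClosed S)
    (F : S → S) (hF : Continuous F) :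
    (∀ ε > (0 : ℝ), ∃ δ > (0 : ℝ), ∀ x y : S,
        (PiNat.dist : Dist (ℕ → A)).dist x.1 y.1 < δ →
          ∀ t : ℕ, (PiNat.dist : Dist (ℕ → A)).dist (F^[t] x).1 (F^[t] y).1 < ε)
      ↔ ∀ k : ℕ,
          (Set.range (fun x : S => fun t : ℕ => fun i : Fin (k + 1) => (F^[t] x).1 i)).Finite := by
  letI : MetricSpace (ℕ → A) := PiNat.metricSpace
  have hdd : ∀ x y : ℕ → A, (PiNat.dist : Dist (ℕ → A)).dist x y = dist x y := fun _ _ => rfl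
  simp only [hdd]
  constructor
  · -- equicontinuity → traces finite
    intro h k
    obtain ⟨δ, δpos, hδ⟩ := h ((1 / 2 : ℝ) ^ k) (by positivity)
    obtain ⟨n, hn⟩ := exists_pow_lt_of_lt_one δpos (by norm_num : (1 / 2 : ℝ) < 1)
    set T : S → (ℕ → Fin (k + 1) → A) := fun x => fun t i => (F^[t] x).1 i with hTdef
    have key : ∀ x y : S, (∀ i : Fin n, x.1 i = y.1 i) → T x = T y := by
      intro x y hxy
      have hcyl : y.1 ∈ PiNat.cylinder x.1 n := fun i hi => (hxy ⟨i, hi⟩).symm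
      have hd : dist x.1 y.1 < δ := by
        have h1 : dist y.1 x.1 ≤ (1 / 2 : ℝ) ^ n := PiNat.mem_cylinder_iff_dist_le.1 hcyl
        rw [dist_comm]
        linarith
      funext t i
      exact PiNat.apply_eq_of_dist_lt (hδ x y hd t) (Nat.lt_succ_iff.1 i.2)
    haveI : Finite {v : Fin n → A // ∃ x : S, ∀ i : Fin n, x.1 i = v i} := Subtype.finite
    set g : {v : Fin n → A // ∃ x : S, ∀ i : Fin n, x.1 i = v i} → (ℕ → Fin (k + 1) → A) :=
      fun p => T p.2.choose with hgdef
    refine (Set.finite_range g).subset ?_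
    rintro _ ⟨x, rfl⟩
    have hx : ∃ z : S, ∀ i : Fin n, z.1 i = x.1 i := ⟨x, fun _ => rfl⟩
    exact ⟨⟨_, hx⟩, key _ _ hx.choose_spec⟩
  · -- traces finite → equicontinuity
    intro h ε εpos
    obtain ⟨k, hk⟩ := exists_pow_lt_of_lt_one εpos (by norm_num : (1 / 2 : ℝ) < 1)
    set T : S → (ℕ → Fin (k + 1) → A) := fun x => fun t i => (F^[t] x).1 i with hTdef
    have hfin : (Set.range T).Finite := h k
    have hcont : Continuous T := by
      refine continuous_pi fun t => continuous_pi fun i => ?_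
      exact (continuous_apply (i : ℕ)).comp (continuous_subtype_val.comp (hF.iterate t))
    have fiber_open : ∀ x : S, IsOpen (T ⁻¹' {T x}) := by
      intro x
      rw [← isClosed_compl_iff]
      have hcompl : (T ⁻¹' {T x})ᶜ = ⋃ v ∈ Set.range T \ {T x}, T ⁻¹' {v} := by
        ext y
        simp only [Set.mem_compl_iff, Set.mem_preimage, Set.mem_singleton_iff, Set.mem_iUnion,
          Set.mem_diff, Set.mem_range]
        constructor
        · intro hy; exact ⟨T y, ⟨⟨y, rfl⟩, hy⟩, rfl⟩
        · rintro ⟨v, ⟨-, hv⟩, rfl⟩; exact hv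
      rw [hcompl]
      exact hfin.diff.isClosed_biUnion fun v _ => isClosed_singleton.preimage hcont
    haveI : CompactSpace ↥S := isCompact_iff_compactSpace.1 hclosed.isCompact
    obtain ⟨δ, δpos, hδ⟩ := lebesgue_number_lemma_of_metric (s := (Set.univ : Set ↥S))
      (c := fun z : ↥S => T ⁻¹' {T z}) isCompact_univ fiber_open
      (fun x _ => Set.mem_iUnion.2 ⟨x, rfl⟩)
    refine ⟨δ, δpos, fun x y hxy t => ?_⟩
    obtain ⟨z, hz⟩ := hδ x (Set.mem_univ x)
    have hxz : T x = T z := hz (Metric.mem_ball_self δpos)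
    have hyz : T y = T z := by
      apply hz
      rw [Metric.mem_ball, Subtype.dist_eq, dist_comm]
      exact hxy
    have hTxy : T x = T y := hxz.trans hyz.symm
    have hcyl : (F^[t] y).1 ∈ PiNat.cylinder (F^[t] x).1 (k + 1) := by
      intro i hi
      exact (congrFun (congrFun hTxy.symm t) ⟨i, hi⟩ : _)
    have h1 : dist (F^[t] y).1 (F^[t] x).1 ≤ (1 / 2 : ℝ) ^ (k + 1) :=
      PiNat.mem_cylinder_iff_dist_le.1 hcyl
    have h2 : ((1 : ℝ) / 2) ^ (k + 1) ≤ (1 / 2 : ℝ) ^ k :=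
      pow_le_pow_of_le_one (by norm_num) (by norm_num) (Nat.le_succ k)
    rw [dist_comm]
    linarith
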